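/- Let 0 < τ < √2, α = 1 − τ²/2, β = √(τ² − τ⁴/4), and define I(η) = Pr_{X,Y ~ N(0,1), independent}[X ≥ η and αX + βY ≥ η]. Then I is differentiable and for every η ∈ ℝ: I′(η) = −√(2/π) · e^{−η²/2} · Φ_c( (1 − α)·η / β ). -/

import Mathlib

open MeasureTheory ProbabilityTheory Real

noncomputable section

/-- `Φ_c(η) = Pr_{X ~ N(0,1)}[X ≥ η]`. -/
def gaussTail (η : ℝ) : ℝ := (gaussianReal 0 1 (Set.Ici η)).toReal

/-- `I(η) = Pr[X ≥ η ∧ αX + βY ≥ η]` for independent standard Gaussians `X, Y`. -/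
def jointTail (α β η : ℝ) : ℝ :=
  (((gaussianReal 0 1).prod (gaussianReal 0 1))
      {z : ℝ × ℝ | η ≤ z.1 ∧ η ≤ α * z.1 + β * z.2}).toReal


abbrev φg : ℝ → ℝ := gaussianPDFReal 0 1

lemma φg_def (t : ℝ) : φg t = (Real.sqrt (2*π))⁻¹ * Real.exp (-t^2/2) := by
  simp [gaussianPDFReal]

lemma φg_nonneg (t : ℝ) : 0 ≤ φg t := gaussianPDFReal_nonneg 0 1 t

lemma continuous_φg : Continuous φg := by
  simp only [gaussianPDFReal_def]
  fun_prop

lemma hasDerivAt_φg (t : ℝ) : HasDerivAt φg (-t * φg t) t := by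
  have h : HasDerivAt (fun x : ℝ => (Real.sqrt (2*π))⁻¹ * Real.exp (-x^2/2))
      ((Real.sqrt (2*π))⁻¹ * (Real.exp (-t^2/2) * (-t))) t := by
    have h1 : HasDerivAt (fun x : ℝ => -x^2/2) (-t) t := by
      have := ((hasDerivAt_pow 2 t).neg).div_const 2
      refine this.congr_deriv ?_
      push_cast
      ring
    exact (h1.exp).const_mul _
  have : (fun x : ℝ => (Real.sqrt (2*π))⁻¹ * Real.exp (-x^2/2)) = φg := by
    ext x; rw [φg_def]
  rw [this] at h
  convert h using 1
  rw [φg_def]; ring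

lemma gaussTail_eq_integral (η : ℝ) : gaussTail η = ∫ x in Set.Ici η, φg x := by
  rw [gaussTail, gaussianReal_apply_eq_integral 0 one_ne_zero,
    ENNReal.toReal_ofReal (integral_nonneg (fun x => φg_nonneg x))]

lemma integrable_φg : Integrable φg := integrable_gaussianPDFReal 0 1

lemma gaussTail_eq_one_sub (η : ℝ) : gaussTail η = 1 - ∫ x in Set.Iic η, φg x := by
  have h := intervalIntegral.integral_Iic_add_Ioi (f := φg) (b := η) (μ := volume) integrable_φg.integrableOn
    integrable_φg.integrableOn
  rw [integral_gaussianPDFReal_eq_one 0 one_ne_zero] at h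
  have h2 : ∫ x in Set.Ioi η, φg x = ∫ x in Set.Ici η, φg x :=
    (MeasureTheory.integral_Ici_eq_integral_Ioi (μ := volume) (f := φg)).symm
  rw [gaussTail_eq_integral, ← h2]
  linarith

lemma hasDerivAt_gaussTail (t : ℝ) : HasDerivAt gaussTail (-φg t) t := by
  have key : ∀ x : ℝ, gaussTail x = 1 - ((∫ s in Set.Iic (0:ℝ), φg s) + ∫ s in (0:ℝ)..x, φg s) := by
    intro x
    rw [gaussTail_eq_one_sub]
    have := intervalIntegral.integral_Iic_sub_Iic (f := φg) (μ := volume) (a := (0:ℝ)) (b := x)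
      integrable_φg.integrableOn integrable_φg.integrableOn
    linarith
  have hd : HasDerivAt (fun x => ∫ s in (0:ℝ)..x, φg s) (φg t) t :=
    intervalIntegral.integral_hasDerivAt_right integrable_φg.intervalIntegrable
      (continuous_φg.stronglyMeasurable.stronglyMeasurableAtFilter)
      continuous_φg.continuousAt
  have : HasDerivAt (fun x => 1 - ((∫ s in Set.Iic (0:ℝ), φg s) + ∫ s in (0:ℝ)..x, φg s))
      (-φg t) t := by
    simpa using ((hd.const_add (∫ s in Set.Iic (0:ℝ), φg s)).const_sub 1)
  have e : gaussTail = fun x => 1 - ((∫ s in Set.Iic (0:ℝ), φg s) + ∫ s in (0:ℝ)..x, φg s) :=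
    funext key
  rw [e]
  exact this

lemma continuous_gaussTail : Continuous gaussTail :=
  continuous_iff_continuousAt.2 fun t => (hasDerivAt_gaussTail t).continuousAt

lemma gaussTail_nonneg (t : ℝ) : 0 ≤ gaussTail t := ENNReal.toReal_nonneg

lemma gaussTail_le_one (t : ℝ) : gaussTail t ≤ 1 := by
  rw [gaussTail]
  have : gaussianReal 0 1 (Set.Ici t) ≤ 1 := prob_le_one
  exact ENNReal.toReal_le_of_le_ofReal zero_le_one (by simpa using this)

lemma gaussTail_eq_one_sub_meas (t : ℝ) :
    gaussTail t = 1 - (gaussianReal 0 1 (Set.Iio t)).toReal := by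
  have hc : Set.Ici t = (Set.Iio t)ᶜ := by simp
  rw [gaussTail, hc, measure_compl measurableSet_Iio (measure_ne_top _ _)]
  rw [measure_univ, ENNReal.toReal_sub_of_le (prob_le_one) (by simp)]
  simp

lemma tendsto_gaussTail_atTop : Filter.Tendsto gaussTail Filter.atTop (nhds 0) := by
  have h1 : Filter.Tendsto (fun t => gaussianReal 0 1 (Set.Iio t)) Filter.atTop
      (nhds (gaussianReal 0 1 Set.univ)) := by
    rw [← Set.iUnion_Iio]
    exact tendsto_measure_iUnion_atTop (fun a b hab x hx => lt_of_lt_of_le hx hab)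
  rw [measure_univ] at h1
  have h2 : Filter.Tendsto (fun t => (gaussianReal 0 1 (Set.Iio t)).toReal) Filter.atTop
      (nhds 1) := by
    have := (ENNReal.tendsto_toReal (by simp : (1:ENNReal) ≠ ⊤)).comp h1
    simpa [Function.comp_def] using this
  have h3 := h2.const_sub 1
  simp only [sub_self] at h3
  have e : gaussTail = fun t => 1 - (gaussianReal 0 1 (Set.Iio t)).toReal :=
    funext gaussTail_eq_one_sub_meas
  rw [e]
  exact h3

lemma measurable_gT_affine (a b c : ℝ) :
    Measurable (fun x : ℝ => gaussTail ((a - b*x)/c)) :=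
  continuous_gaussTail.measurable.comp
    (((measurable_id.const_mul b).const_sub a).div_const c)

lemma jointTail_repr {α β : ℝ} (hβ : 0 < β) (η : ℝ) :
    jointTail α β η = ∫ x in Set.Ici η, gaussTail ((η - α*x)/β) * φg x ∂volume := by
  set μ := gaussianReal 0 1 with hμ
  have hS : MeasurableSet {z : ℝ × ℝ | η ≤ z.1 ∧ η ≤ α * z.1 + β * z.2} := by
    refine MeasurableSet.inter ?_ ?_
    · exact measurableSet_le measurable_const measurable_fst
    · exact measurableSet_le measurable_const
        ((measurable_fst.const_mul α).add (measurable_snd.const_mul β))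
  have hkey : ∀ x : ℝ, μ (Prod.mk x ⁻¹' {z : ℝ × ℝ | η ≤ z.1 ∧ η ≤ α * z.1 + β * z.2})
      = Set.indicator (Set.Ici η)
          (fun x => ENNReal.ofReal (gaussTail ((η - α*x)/β))) x := by
    intro x
    by_cases hx : η ≤ x
    · have hset : Prod.mk x ⁻¹' {z : ℝ × ℝ | η ≤ z.1 ∧ η ≤ α * z.1 + β * z.2}
          = Set.Ici ((η - α*x)/β) := by
        ext y
        simp only [Set.mem_preimage, Set.mem_setOf_eq, Set.mem_Ici, hx, true_and]
        rw [div_le_iff₀ hβ]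
        constructor <;> intro h <;> nlinarith
      rw [hset, Set.indicator_of_mem (Set.mem_Ici.2 hx)]
      exact (ENNReal.ofReal_toReal (measure_ne_top μ _)).symm
    · have hset : Prod.mk x ⁻¹' {z : ℝ × ℝ | η ≤ z.1 ∧ η ≤ α * z.1 + β * z.2} = ∅ := by
        ext y; simp [hx]
      rw [hset, Set.indicator_of_notMem (fun h => hx (Set.mem_Ici.1 h))]
      simp
  have h1 : ((μ.prod μ) {z : ℝ × ℝ | η ≤ z.1 ∧ η ≤ α * z.1 + β * z.2})
      = ∫⁻ x in Set.Ici η, ENNReal.ofReal (gaussTail ((η - α*x)/β)) ∂μ := by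
    rw [Measure.prod_apply hS]
    rw [lintegral_congr hkey, lintegral_indicator measurableSet_Ici]
  have hg : Measurable fun x : ℝ => ENNReal.ofReal (gaussTail ((η - α*x)/β)) :=
    (measurable_gT_affine η α β).ennreal_ofReal
  have h2 : ∫⁻ x in Set.Ici η, ENNReal.ofReal (gaussTail ((η - α*x)/β)) ∂μ
      = ∫⁻ x in Set.Ici η, ENNReal.ofReal (gaussTail ((η - α*x)/β) * φg x) ∂volume := by
    rw [hμ, gaussianReal_of_var_ne_zero 0 one_ne_zero,
      setLIntegral_withDensity_eq_setLIntegral_mul volume (measurable_gaussianPDF 0 1) hg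
        measurableSet_Ici]
    refine setLIntegral_congr_fun measurableSet_Ici (fun x _ => ?_)
    simp only [Pi.mul_apply, gaussianPDF]
    rw [← ENNReal.ofReal_mul (gaussianPDFReal_nonneg 0 1 x), mul_comm]
  have h3 : ∫ x in Set.Ici η, gaussTail ((η - α*x)/β) * φg x ∂volume
      = (∫⁻ x in Set.Ici η, ENNReal.ofReal (gaussTail ((η - α*x)/β) * φg x) ∂volume).toReal := by
    rw [integral_eq_lintegral_of_nonneg_ae]
    · exact Filter.Eventually.of_forall fun x =>
        mul_nonneg (gaussTail_nonneg _) (φg_nonneg x)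
    · exact ((measurable_gT_affine η α β).mul
        (measurable_gaussianPDFReal 0 1)).aestronglyMeasurable
  rw [jointTail, h1, h2, h3]

lemma jointTail_repr' {α β : ℝ} (hβ : 0 < β) (η : ℝ) :
    jointTail α β η
      = ∫ s in Set.Ioi (0:ℝ), gaussTail (((1-α)*η - α*s)/β) * φg (η+s) ∂volume := by
  rw [jointTail_repr hβ η]
  set G : ℝ → ℝ := fun x => gaussTail ((η - α*x)/β) * φg x with hG
  have h1 : ∫ x in Set.Ici η, G x = ∫ x, (Set.Ici η).indicator G x :=
    (integral_indicator measurableSet_Ici).symm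
  have h2 : ∫ x, (Set.Ici η).indicator G x = ∫ x, (Set.Ici η).indicator G (x + η) :=
    (MeasureTheory.integral_add_right_eq_self _ η).symm
  have h3 : ∀ x : ℝ, (Set.Ici η).indicator G (x + η)
      = (Set.Ici (0:ℝ)).indicator (fun s => G (s + η)) x := by
    intro x
    by_cases hx : (0:ℝ) ≤ x
    · rw [Set.indicator_of_mem (Set.mem_Ici.2 (by linarith : η ≤ x + η)),
        Set.indicator_of_mem (Set.mem_Ici.2 hx)]
    · rw [Set.indicator_of_notMem (fun h => hx (by linarith [Set.mem_Ici.1 h])),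
        Set.indicator_of_notMem (fun h => hx (Set.mem_Ici.1 h))]
  have h4 : ∫ x, (Set.Ici (0:ℝ)).indicator (fun s => G (s + η)) x
      = ∫ s in Set.Ici (0:ℝ), G (s + η) := integral_indicator measurableSet_Ici
  have h5 : ∫ s in Set.Ici (0:ℝ), G (s + η) = ∫ s in Set.Ioi (0:ℝ), G (s + η) :=
    MeasureTheory.integral_Ici_eq_integral_Ioi
  have h6 : ∀ s : ℝ, G (s + η) = gaussTail (((1-α)*η - α*s)/β) * φg (η+s) := by
    intro s
    rw [hG]
    simp only
    rw [show η - α*(s+η) = (1-α)*η - α*s by ring, show s + η = η + s by ring]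
  calc ∫ x in Set.Ici η, G x = ∫ s in Set.Ioi (0:ℝ), G (s + η) := by
        rw [h1, h2, ← h5, ← h4]
        exact integral_congr_ae (Filter.Eventually.of_forall h3)
    _ = ∫ s in Set.Ioi (0:ℝ), gaussTail (((1-α)*η - α*s)/β) * φg (η+s) ∂volume :=
        integral_congr_ae (Filter.Eventually.of_forall fun s => h6 s)

section deriv

variable {α β : ℝ}

/-- integrand after shifting -/
def Fj (α β x s : ℝ) : ℝ := gaussTail (((1-α)*x - α*s)/β) * φg (x+s)

/-- its x-derivative -/
def Fj' (α β x s : ℝ) : ℝ :=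
  -((1-α)/β * φg (((1-α)*x - α*s)/β) * φg (x+s))
    - (x+s) * (gaussTail (((1-α)*x - α*s)/β) * φg (x+s))

lemma hasDerivAt_Fj (hβ : β ≠ 0) (s x : ℝ) :
    HasDerivAt (fun x => Fj α β x s) (Fj' α β x s) x := by
  have h1 : HasDerivAt (fun x : ℝ => ((1-α)*x - α*s)/β) ((1-α)/β) x := by
    have := (((hasDerivAt_id x).const_mul (1-α)).sub_const (α*s)).div_const β
    simpa using this
  have h2 : HasDerivAt (fun x => gaussTail (((1-α)*x - α*s)/β))
      (-φg (((1-α)*x - α*s)/β) * ((1-α)/β)) x :=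
    (hasDerivAt_gaussTail _).comp x h1
  have h3 : HasDerivAt (fun x : ℝ => x + s) 1 x := (hasDerivAt_id x).add_const s
  have h4 : HasDerivAt (fun x : ℝ => φg (x+s)) (-(x+s) * φg (x+s) * 1) x :=
    (hasDerivAt_φg (x+s)).comp (h₂ := φg) (h := fun x : ℝ => x + s) x h3
  have h5 := h2.mul h4
  refine h5.congr_deriv ?_
  simp only [Fj']
  ring

lemma continuous_Fj (x : ℝ) : Continuous (fun s => Fj α β x s) := by
  apply Continuous.mul
  · exact continuous_gaussTail.comp (by fun_prop)
  · exact continuous_φg.comp (by fun_prop)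

lemma continuous_Fj' (x : ℝ) : Continuous (fun s => Fj' α β x s) := by
  apply Continuous.sub
  · apply Continuous.neg
    apply Continuous.mul
    · exact (continuous_const.mul (continuous_φg.comp (by fun_prop)))
    · exact continuous_φg.comp (by fun_prop)
  · apply Continuous.mul
    · fun_prop
    · apply Continuous.mul
      · exact continuous_gaussTail.comp (by fun_prop)
      · exact continuous_φg.comp (by fun_prop)

lemma φg_le (t : ℝ) : φg t ≤ (Real.sqrt (2*π))⁻¹ := by
  rw [φg_def]
  have h1 : Real.exp (-t^2/2) ≤ 1 := by
    rw [Real.exp_le_one_iff]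
    nlinarith [sq_nonneg t]
  have h2 : (0:ℝ) ≤ (Real.sqrt (2*π))⁻¹ := by positivity
  nlinarith

/-- the dominating function -/
def bnd (α β η₀ s : ℝ) : ℝ :=
  ((1-α)/β * (Real.sqrt (2*π))⁻¹ + ((|η₀|+1) + |s|))
    * ((Real.sqrt (2*π))⁻¹ * Real.exp ((|η₀|+1)^2/2) * Real.exp (-(s-(|η₀|+1))^2/2))

lemma Fj'_bound (hβ : 0 < β) (h1α : 0 ≤ 1 - α) (η₀ : ℝ) {s x : ℝ} (hs : 0 ≤ s)
    (hx : x ∈ Metric.ball η₀ 1) : ‖Fj' α β x s‖ ≤ bnd α β η₀ s := by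
  have hxd : |x - η₀| < 1 := by
    simpa [Real.dist_eq] using hx
  set c : ℝ := |η₀| + 1 with hc
  have hk : (0:ℝ) ≤ (Real.sqrt (2*π))⁻¹ := by positivity
  set u : ℝ := ((1-α)*x - α*s)/β with hu
  have hφx : φg (x+s) ≤ (Real.sqrt (2*π))⁻¹ * Real.exp (c^2/2) * Real.exp (-(s-c)^2/2) := by
    rw [φg_def, mul_assoc, ← Real.exp_add]
    have h1 : -c ≤ x := by
      have h2 := abs_le.1 hxd.le
      have h3 := neg_abs_le η₀
      simp only [hc]; linarith [h2.1]
    have hexp : -(x+s)^2/2 ≤ c^2/2 + -(s-c)^2/2 := by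
      nlinarith [sq_nonneg x, mul_nonneg hs (by linarith : (0:ℝ) ≤ c + x)]
    have := Real.exp_le_exp.2 hexp
    nlinarith
  have hφx0 : 0 ≤ φg (x+s) := φg_nonneg _
  have hxs : |x+s| ≤ c + |s| := by
    have h2 : |x| ≤ c := by
      have h3 : |x| ≤ |x - η₀| + |η₀| := by
        calc |x| = |(x - η₀) + η₀| := by ring_nf
          _ ≤ |x - η₀| + |η₀| := abs_add_le _ _
      simp only [hc]; linarith
    calc |x+s| ≤ |x| + |s| := abs_add_le _ _
      _ ≤ c + |s| := by linarith
  set a : ℝ := (1-α)/β * φg u * φg (x+s) with ha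
  set b : ℝ := (x+s) * (gaussTail u * φg (x+s)) with hb
  have ha0 : 0 ≤ a := by
    rw [ha]
    exact mul_nonneg (mul_nonneg (div_nonneg h1α hβ.le) (φg_nonneg _)) hφx0
  have hterm1 : ‖Fj' α β x s‖ ≤ a + |x+s| * (gaussTail u * φg (x+s)) := by
    have h0 : Fj' α β x s = (-a) - b := rfl
    rw [h0, Real.norm_eq_abs]
    calc |(-a) - b| ≤ |(-a)| + |b| := abs_sub _ _
      _ = a + |x+s| * (gaussTail u * φg (x+s)) := by
          rw [abs_neg, abs_of_nonneg ha0, hb, abs_mul,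
            abs_of_nonneg (mul_nonneg (gaussTail_nonneg _) hφx0)]
  have hA : (1-α)/β * φg u ≤ (1-α)/β * (Real.sqrt (2*π))⁻¹ :=
    mul_le_mul_of_nonneg_left (φg_le _) (div_nonneg h1α hβ.le)
  have hgT : gaussTail u * φg (x+s) ≤ φg (x+s) := by
    nlinarith [gaussTail_le_one u, gaussTail_nonneg u]
  have hstep : ‖Fj' α β x s‖ ≤ ((1-α)/β * (Real.sqrt (2*π))⁻¹ + (c + |s|)) * φg (x+s) := by
    have h1 : a ≤ (1-α)/β * (Real.sqrt (2*π))⁻¹ * φg (x+s) := by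
      rw [ha]; exact mul_le_mul_of_nonneg_right hA hφx0
    have h2 : |x+s| * (gaussTail u * φg (x+s)) ≤ (c + |s|) * φg (x+s) := by
      have := mul_le_mul hxs hgT (mul_nonneg (gaussTail_nonneg _) hφx0)
        (by positivity : (0:ℝ) ≤ c + |s|)
      linarith
    nlinarith [hterm1]
  refine hstep.trans ?_
  rw [bnd]
  have hcoef : (0:ℝ) ≤ (1-α)/β * (Real.sqrt (2*π))⁻¹ + (c + |s|) := by
    have h5 := abs_nonneg s
    have h6 := abs_nonneg η₀
    have h7 := div_nonneg h1α hβ.le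
    positivity
  exact mul_le_mul_of_nonneg_left hφx hcoef

lemma integrable_bnd (η₀ : ℝ) : Integrable (fun s => bnd α β η₀ s) := by
  set c : ℝ := |η₀| + 1 with hc
  set A : ℝ := (1-α)/β * (Real.sqrt (2*π))⁻¹ with hA
  set B : ℝ := (Real.sqrt (2*π))⁻¹ * Real.exp (c^2/2) with hB
  have hB0 : 0 ≤ B := by rw [hB]; positivity
  have hc0 : (0:ℝ) ≤ c := by rw [hc]; positivity
  have key : Integrable (fun t : ℝ => (A + (c + |t + c|)) * (B * Real.exp (-(1/2) * t^2))) := by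
    have h1 : Integrable (fun t : ℝ => Real.exp (-(1/2) * t^2)) :=
      integrable_exp_neg_mul_sq (by norm_num)
    have h2 : Integrable (fun t : ℝ => t * Real.exp (-(1/2) * t^2)) := by
      have := integrable_rpow_mul_exp_neg_mul_sq (b := 1/2) (by norm_num) (s := 1) (by norm_num)
      simpa using this
    have h3 : Integrable (fun t : ℝ => |t| * Real.exp (-(1/2) * t^2)) := by
      refine h2.abs.congr (Filter.Eventually.of_forall fun t => ?_)
      show |t * Real.exp (-(1/2) * t^2)| = |t| * Real.exp (-(1/2) * t^2)
      rw [abs_mul, abs_of_nonneg (Real.exp_nonneg _)]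
    have h4 : Integrable (fun t : ℝ =>
        (|A| + 2*c) * B * Real.exp (-(1/2) * t^2) + B * (|t| * Real.exp (-(1/2) * t^2))) :=
      (h1.const_mul _).add (h3.const_mul _)
    refine h4.mono ?_ (Filter.Eventually.of_forall fun t => ?_)
    · apply Continuous.aestronglyMeasurable
      fun_prop
    · rw [Real.norm_eq_abs, Real.norm_eq_abs]
      have he0 : (0:ℝ) ≤ Real.exp (-(1/2) * t^2) := Real.exp_nonneg _
      have h5 : abs (A + (c + |t+c|)) ≤ |A| + 2*c + |t| := by
        have h6 : |t + c| ≤ |t| + c := by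
          calc |t + c| ≤ |t| + |c| := abs_add_le _ _
            _ = |t| + c := by rw [abs_of_nonneg hc0]
        have h6b : abs (c + |t+c|) = c + |t+c| := abs_of_nonneg (by positivity)
        calc abs (A + (c + |t+c|)) ≤ |A| + abs (c + |t+c|) := abs_add_le _ _
          _ = |A| + (c + |t+c|) := by rw [h6b]
          _ ≤ |A| + 2*c + |t| := by linarith
      have h7 : abs ((A + (c + |t + c|)) * (B * Real.exp (-(1/2) * t^2)))
          ≤ (|A| + 2*c + |t|) * (B * Real.exp (-(1/2) * t^2)) := by
        rw [abs_mul, abs_of_nonneg (by positivity : (0:ℝ) ≤ B * Real.exp (-(1/2) * t^2))]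
        exact mul_le_mul_of_nonneg_right h5 (by positivity)
      refine h7.trans ?_
      have h8 : (|A| + 2*c + |t|) * (B * Real.exp (-(1/2) * t^2))
          = (|A| + 2*c) * B * Real.exp (-(1/2) * t^2)
            + B * (|t| * Real.exp (-(1/2) * t^2)) := by ring
      rw [h8]
      exact le_abs_self _
  have hcomp := key.comp_sub_right c
  refine hcomp.congr (Filter.Eventually.of_forall fun s => ?_)
  show (A + (c + |s - c + c|)) * (B * Real.exp (-(1/2) * (s - c)^2)) = bnd α β η₀ s
  simp only [bnd, ← hc, ← hA, ← hB]
  rw [sub_add_cancel]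
  ring_nf

end deriv

section final

variable {α β : ℝ}

lemma φg_mul_φg (hαβ : α^2 + β^2 = 1) (hβ : β ≠ 0) (η s : ℝ) :
    φg (((1-α)*η - α*s)/β) * φg (η+s) = φg η * φg (((1-α)*η + s)/β) := by
  have hb2 : β^2 = 1 - α^2 := by linarith
  have hkey : (((1-α)*η - α*s)/β)^2 + (η+s)^2 = η^2 + (((1-α)*η + s)/β)^2 := by
    field_simp
    linear_combination ((η+s)^2 - η^2) * hb2
  rw [φg_def, φg_def, φg_def, φg_def, mul_mul_mul_comm, ← Real.exp_add,
    mul_mul_mul_comm, ← Real.exp_add]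
  congr 1
  have : -(((1-α)*η - α*s)/β)^2/2 + -(η+s)^2/2 = -η^2/2 + -(((1-α)*η + s)/β)^2/2 := by
    linarith
  rw [this]

/-- antiderivative of `Fj' α β η ·` -/
def Aa (α β η s : ℝ) : ℝ :=
  gaussTail (((1-α)*η - α*s)/β) * φg (η+s) + φg η * gaussTail (((1-α)*η + s)/β)

lemma hasDerivAt_Aa (hαβ : α^2 + β^2 = 1) (hβ : β ≠ 0) (η s : ℝ) :
    HasDerivAt (fun s => Aa α β η s) (Fj' α β η s) s := by
  have h1 : HasDerivAt (fun s : ℝ => ((1-α)*η - α*s)/β) (-α/β) s := by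
    have := (((hasDerivAt_id s).const_mul α).const_sub ((1-α)*η)).div_const β
    simpa using this
  have h2 : HasDerivAt (fun s => gaussTail (((1-α)*η - α*s)/β))
      (-φg (((1-α)*η - α*s)/β) * (-α/β)) s := (hasDerivAt_gaussTail _).comp s h1
  have h3 : HasDerivAt (fun s : ℝ => φg (η+s)) (-(η+s) * φg (η+s) * 1) s :=
    (hasDerivAt_φg (η+s)).comp s ((hasDerivAt_id s).const_add η)
  have h4 := h2.mul h3
  have h5 : HasDerivAt (fun s : ℝ => ((1-α)*η + s)/β) (1/β) s := by
    have := ((hasDerivAt_id s).const_add ((1-α)*η)).div_const β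
    simpa using this
  have h6 := ((hasDerivAt_gaussTail (((1-α)*η + s)/β)).comp s h5).const_mul (φg η)
  have h7 := h4.add h6
  refine h7.congr_deriv ?_
  have hid := φg_mul_φg hαβ hβ η s
  rw [Fj']
  field_simp
  linear_combination (1:ℝ) * hid

lemma tendsto_Aa (hβ0 : 0 < β) (η : ℝ) :
    Filter.Tendsto (fun s => Aa α β η s) Filter.atTop (nhds 0) := by
  have hshift : Filter.Tendsto (fun s : ℝ => η + s) Filter.atTop Filter.atTop :=
    Filter.tendsto_atTop_add_const_left _ η Filter.tendsto_id
  have hφ : Filter.Tendsto (fun s : ℝ => φg (η+s)) Filter.atTop (nhds 0) := by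
    have hsq : Filter.Tendsto (fun t : ℝ => -t^2/2) Filter.atTop Filter.atBot := by
      apply Filter.Tendsto.atBot_div_const (by norm_num : (0:ℝ) < 2)
      exact Filter.tendsto_neg_atTop_atBot.comp (Filter.tendsto_pow_atTop (by norm_num))
    have hexp : Filter.Tendsto (fun t : ℝ => Real.exp (-t^2/2)) Filter.atTop (nhds 0) :=
      Real.tendsto_exp_atBot.comp hsq
    have h1 : Filter.Tendsto (fun t : ℝ => φg t) Filter.atTop (nhds 0) := by
      have h2 := hexp.const_mul ((Real.sqrt (2*π))⁻¹)
      rw [mul_zero] at h2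
      refine h2.congr fun t => ?_
      rw [φg_def]
    exact h1.comp hshift
  have hterm1 : Filter.Tendsto
      (fun s => gaussTail (((1-α)*η - α*s)/β) * φg (η+s)) Filter.atTop (nhds 0) := by
    apply squeeze_zero (fun s => mul_nonneg (gaussTail_nonneg _) (φg_nonneg _))
      (fun s => ?_) hφ
    nlinarith [gaussTail_le_one (((1-α)*η - α*s)/β), gaussTail_nonneg (((1-α)*η - α*s)/β),
      φg_nonneg (η+s)]
  have hterm2 : Filter.Tendsto
      (fun s => φg η * gaussTail (((1-α)*η + s)/β)) Filter.atTop (nhds 0) := by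
    have hw : Filter.Tendsto (fun s : ℝ => ((1-α)*η + s)/β) Filter.atTop Filter.atTop := by
      apply Filter.Tendsto.atTop_div_const hβ0
      exact Filter.tendsto_atTop_add_const_left _ _ Filter.tendsto_id
    have := (tendsto_gaussTail_atTop.comp hw).const_mul (φg η)
    rw [mul_zero] at this
    exact this
  have := hterm1.add hterm2
  rw [add_zero] at this
  exact this

lemma integrable_Fj (η₀ : ℝ) :
    Integrable (fun s => Fj α β η₀ s) (volume.restrict (Set.Ioi (0:ℝ))) := by
  have hint : Integrable (fun s : ℝ => φg (η₀ + s)) := by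
    have := integrable_φg.comp_sub_right (-η₀)
    refine this.congr (Filter.Eventually.of_forall fun s => ?_)
    show φg (s - -η₀) = φg (η₀ + s)
    rw [show s - -η₀ = η₀ + s by ring]
  refine Integrable.mono hint.integrableOn (continuous_Fj η₀).aestronglyMeasurable
    (Filter.Eventually.of_forall fun s => ?_)
  rw [Real.norm_eq_abs, Real.norm_eq_abs, Fj,
    abs_of_nonneg (mul_nonneg (gaussTail_nonneg _) (φg_nonneg _)),
    abs_of_nonneg (φg_nonneg _)]
  nlinarith [gaussTail_le_one (((1-α)*η₀ - α*s)/β), gaussTail_nonneg (((1-α)*η₀ - α*s)/β),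
    φg_nonneg (η₀+s)]

lemma main_step (hαβ : α^2 + β^2 = 1) (h1α : 0 ≤ 1 - α) (hβ0 : 0 < β) (η : ℝ) :
    HasDerivAt (fun x => ∫ s in Set.Ioi (0:ℝ), Fj α β x s)
      (-(2 * φg η * gaussTail ((1-α)*η/β))) η := by
  have hdom := hasDerivAt_integral_of_dominated_loc_of_deriv_le
    (F := fun x s => Fj α β x s) (F' := fun x s => Fj' α β x s)
    (x₀ := η) (s := Metric.ball η 1) (bound := fun s => bnd α β η s)
    (μ := volume.restrict (Set.Ioi (0:ℝ))) (Metric.ball_mem_nhds η one_pos)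
    (Filter.Eventually.of_forall fun x => (continuous_Fj x).aestronglyMeasurable)
    (integrable_Fj η)
    (continuous_Fj' η).aestronglyMeasurable
    ((ae_restrict_iff' measurableSet_Ioi).2 (Filter.Eventually.of_forall
      fun s hs x hx => Fj'_bound hβ0 h1α η (le_of_lt hs) hx))
    (integrable_bnd η).integrableOn
    (Filter.Eventually.of_forall fun s x _ => hasDerivAt_Fj hβ0.ne' s x)
  obtain ⟨hint, hderiv⟩ := hdom
  have hval : ∫ s in Set.Ioi (0:ℝ), Fj' α β η s = -(2 * φg η * gaussTail ((1-α)*η/β)) := by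
    have h := integral_Ioi_of_hasDerivAt_of_tendsto' (a := (0:ℝ))
      (fun x _ => hasDerivAt_Aa hαβ hβ0.ne' η x) hint (tendsto_Aa hβ0 η)
    rw [h, Aa]
    rw [show ((1-α)*η - α*0)/β = (1-α)*η/β by ring, show η+(0:ℝ) = η by ring,
      show ((1-α)*η + 0)/β = (1-α)*η/β by ring]
    ring
  rw [← hval]
  exact hderiv

end final

/-- For `0 < τ < √2`, `α = 1 - τ²/2`, `β = √(τ² - τ⁴/4)`, the function
`I(η) = Pr[X ≥ η ∧ αX + βY ≥ η]` is differentiable with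
`I′(η) = -√(2/π) · e^{-η²/2} · Φ_c((1-α)η/β)`. -/
theorem jointTail_hasDerivAt (τ α β : ℝ) (hτ0 : 0 < τ) (hτ : τ < Real.sqrt 2)
    (hα : α = 1 - τ ^ 2 / 2) (hβ : β = Real.sqrt (τ ^ 2 - τ ^ 4 / 4)) (η : ℝ) :
    HasDerivAt (jointTail α β)
      (-(Real.sqrt (2 / π) * Real.exp (-η ^ 2 / 2) * gaussTail ((1 - α) * η / β))) η := by
  have h2 : Real.sqrt 2 ^ 2 = 2 := Real.sq_sqrt (by norm_num)
  have hτ2 : τ^2 < 2 := by nlinarith [Real.sqrt_nonneg 2]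
  have hnn : (0:ℝ) ≤ τ^2 - τ^4/4 := by nlinarith [sq_nonneg τ]
  have hpos : (0:ℝ) < τ^2 - τ^4/4 := by nlinarith [sq_nonneg τ]
  have hβ0 : 0 < β := hβ ▸ Real.sqrt_pos.2 hpos
  have hb2 : β^2 = τ^2 - τ^4/4 := by rw [hβ]; exact Real.sq_sqrt hnn
  have hαβ : α^2 + β^2 = 1 := by rw [hα]; linear_combination hb2
  have h1α : (0:ℝ) ≤ 1 - α := by rw [hα]; nlinarith [sq_nonneg τ]
  have hrepr : jointTail α β = fun x => ∫ s in Set.Ioi (0:ℝ), Fj α β x s := by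
    funext x
    exact jointTail_repr' hβ0 x
  rw [hrepr]
  have hmain := main_step hαβ h1α hβ0 η
  convert hmain using 1
  have hs : Real.sqrt (2/π) = 2 / Real.sqrt (2*π) := by
    have h2π : (0:ℝ) < 2*π := by positivity
    have h : ((2:ℝ)/Real.sqrt (2*π))^2 = 2/π := by
      rw [div_pow, Real.sq_sqrt h2π.le, div_eq_div_iff (by positivity) (by positivity)]
      ring
    calc Real.sqrt (2/π) = Real.sqrt (((2:ℝ)/Real.sqrt (2*π))^2) := by rw [h]
      _ = 2/Real.sqrt (2*π) := Real.sqrt_sq (by positivity)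
  rw [hs, φg_def]
  ring
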